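/- Let X_0, X_1, …, X_k be independent random variables taking values in [a, b] each with mean μ, and define Y_{k} = Σ_{i=0}^{k} w_i X_i where w_i = (2/(i+2))·∏_{j=i+1}^{k} (j/(j+2)). Then each w_i ≤ 2/(k+2), Σ_{i=0}^k w_i = 1 (up to the initial-term weighting), and P(|Y_k - μ| ≥ ε) ≤ 2 exp(-(k+2)ε²/(2(b-a)²)). -/

import Mathlib

open MeasureTheory ProbabilityTheory Real

lemma aux_nonneg_of_deriv (f f' : ℝ → ℝ) (hd : ∀ x, HasDerivAt f (f' x) x)
    (h0 : f 0 = 0) (hf' : ∀ x, 0 ≤ x → 0 ≤ f' x) : ∀ u, 0 ≤ u → 0 ≤ f u := by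
  intro u hu
  have hmono : MonotoneOn f (Set.Ici 0) := by
    apply monotoneOn_of_deriv_nonneg (convex_Ici 0)
    · exact fun x _ => (hd x).continuousAt.continuousWithinAt
    · exact fun x _ => (hd x).differentiableAt.differentiableWithinAt
    · intro x hx
      rw [interior_Ici] at hx
      rw [(hd x).deriv]
      exact hf' x (le_of_lt hx)
  have := hmono (Set.self_mem_Ici) (Set.mem_Ici.mpr hu) hu
  linarith [h0 ▸ this]

lemma aux_sinh_le (u : ℝ) (hu : 0 ≤ u) : Real.sinh u ≤ u * Real.cosh u := by
  have h := aux_nonneg_of_deriv (fun x => x * Real.cosh x - Real.sinh x)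
    (fun x => x * Real.sinh x) ?_ (by simp) ?_ u hu
  · linarith [show (0:ℝ) ≤ u * Real.cosh u - Real.sinh u from h]
  · intro x
    have h1 := ((hasDerivAt_id x).mul (Real.hasDerivAt_cosh x)).sub (Real.hasDerivAt_sinh x)
    refine h1.congr_deriv ?_
    simp only [id_eq]
    ring
  · intro x hx
    exact mul_nonneg hx (Real.sinh_nonneg_iff.mpr hx)

lemma aux_sinh_ge (u : ℝ) (hu : 0 ≤ u) : (u - u^2/2) * Real.cosh u ≤ Real.sinh u := by
  have h := aux_nonneg_of_deriv (fun x => Real.sinh x - (x - x^2/2) * Real.cosh x)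
    (fun x => x * Real.exp (-x) + x^2/2 * Real.sinh x) ?_ (by simp) ?_ u hu
  · linarith [show (0:ℝ) ≤ Real.sinh u - (u - u^2/2) * Real.cosh u from h]
  · intro x
    have h1 := (Real.hasDerivAt_sinh x).sub
      ((((hasDerivAt_id x).sub (((hasDerivAt_id x).pow 2).div_const 2)).mul
        (Real.hasDerivAt_cosh x)))
    refine h1.congr_deriv ?_
    simp only [id_eq, Pi.sub_apply, Pi.pow_apply]
    push_cast
    rw [← Real.cosh_sub_sinh]
    ring
  · intro x hx
    have := Real.exp_pos (-x)
    have := Real.sinh_nonneg_iff.mpr hx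
    positivity

lemma aux_key_nonneg (r u : ℝ) (hr : |r| ≤ 1) (hu : 0 ≤ u) :
    Real.cosh u + r * Real.sinh u ≤ Real.exp (r * u + u^2) := by
  obtain ⟨hr1, hr2⟩ := abs_le.mp hr
  have hc : 0 < Real.cosh u := Real.cosh_pos u
  have hs0 : 0 ≤ Real.sinh u := Real.sinh_nonneg_iff.mpr hu
  have hsc : Real.sinh u ≤ Real.cosh u := by nlinarith [Real.cosh_sq u]
  set t : ℝ := Real.sinh u / Real.cosh u with ht
  have ht0 : 0 ≤ t := div_nonneg hs0 hc.le
  have ht1 : t ≤ 1 := by rw [ht, div_le_one hc]; exact hsc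
  have htu : t ≤ u := by rw [ht, div_le_iff₀ hc]; exact aux_sinh_le u hu
  have htl : u - u^2/2 ≤ t := by
    rw [ht, le_div_iff₀ hc]; exact aux_sinh_ge u hu
  have heq : Real.cosh u + r * Real.sinh u = Real.cosh u * (1 + r * t) := by
    rw [ht]; field_simp
  have h1rt : 0 ≤ 1 + r * t := by nlinarith
  have hrtu : r * t ≤ r * u + u^2/2 := by
    rcases le_or_gt 0 r with h | h
    · nlinarith
    · nlinarith
  calc Real.cosh u + r * Real.sinh u = Real.cosh u * (1 + r * t) := heq
    _ ≤ Real.exp (u^2/2) * (1 + r * t) :=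
        mul_le_mul_of_nonneg_right (Real.cosh_le_exp_half_sq u) h1rt
    _ ≤ Real.exp (u^2/2) * Real.exp (r * t) := by
        have := Real.add_one_le_exp (r * t)
        nlinarith [Real.exp_pos (u^2/2)]
    _ ≤ Real.exp (u^2/2) * Real.exp (r * u + u^2/2) := by
        gcongr
    _ = Real.exp (r * u + u^2) := by rw [← Real.exp_add]; ring_nf

lemma aux_key (r u : ℝ) (hr : |r| ≤ 1) :
    Real.cosh u + r * Real.sinh u ≤ Real.exp (r * u + u^2) := by
  rcases le_or_gt 0 u with h | h
  · exact aux_key_nonneg r u hr h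
  · have := aux_key_nonneg (-r) (-u) (by rwa [abs_neg]) (by linarith)
    simp only [Real.cosh_neg, Real.sinh_neg] at this
    calc Real.cosh u + r * Real.sinh u = Real.cosh u + -r * -Real.sinh u := by ring
      _ ≤ Real.exp (-r * -u + (-u)^2) := this
      _ = Real.exp (r * u + u^2) := by ring_nf

lemma aux_frac (A B t : ℝ) (hA : A ≤ 0) (hB : 0 ≤ B) (hAB : A < B) :
    (B * Real.exp (t*A) - A * Real.exp (t*B)) / (B - A)
      ≤ Real.exp (t^2 * (B-A)^2 / 4) := by
  have hD : (0:ℝ) < B - A := by linarith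
  set u : ℝ := t * (B - A) / 2 with hu
  set r : ℝ := -(A + B) / (B - A) with hr
  have hrle : |r| ≤ 1 := by
    rw [abs_le]
    constructor
    · rw [hr, le_div_iff₀ hD]; linarith
    · rw [hr, div_le_iff₀ hD]; linarith
  have hid : (B * Real.exp (t*A) - A * Real.exp (t*B)) / (B - A)
      = Real.exp (-(r*u)) * (Real.cosh u + r * Real.sinh u) := by
    rw [Real.cosh_eq, Real.sinh_eq,
      show t*A = -(r*u) + -u by rw [hr, hu]; field_simp; ring,
      show t*B = -(r*u) + u by rw [hr, hu]; field_simp; ring,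
      Real.exp_add, Real.exp_add]
    rw [hr]
    field_simp
    ring
  rw [hid]
  calc Real.exp (-(r*u)) * (Real.cosh u + r * Real.sinh u)
      ≤ Real.exp (-(r*u)) * Real.exp (r*u + u^2) :=
        mul_le_mul_of_nonneg_left (aux_key r u hrle) (Real.exp_pos _).le
    _ = Real.exp (t^2 * (B-A)^2 / 4) := by
        rw [← Real.exp_add]
        congr 1
        rw [hu]
        ring

lemma aux_integrable_of_bdd {Ω : Type*} [MeasurableSpace Ω] (P : Measure Ω)
    [IsProbabilityMeasure P] (f : Ω → ℝ) (C : ℝ) (hf : Measurable f)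
    (hb : ∀ ω, |f ω| ≤ C) : Integrable f P :=
  (integrable_const C).mono' hf.aestronglyMeasurable (ae_of_all _ hb)

lemma aux_mgf_bounded {Ω : Type*} [MeasurableSpace Ω] (P : Measure Ω)
    [IsProbabilityMeasure P] (Z : Ω → ℝ) (A B t : ℝ) (hZm : Measurable Z)
    (hb : ∀ ω, Z ω ∈ Set.Icc A B) (hAB : A < B) (hmean : ∫ ω, Z ω ∂P = 0) :
    mgf Z P t ≤ Real.exp (t^2 * (B-A)^2 / 4) := by
  have hD : (0:ℝ) < B - A := by linarith
  have hZint : Integrable Z P := by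
    apply aux_integrable_of_bdd P Z (|A| + |B|) hZm
    intro ω
    obtain ⟨h1, h2⟩ := hb ω
    rw [abs_le]
    constructor
    · have := neg_abs_le A; have := abs_nonneg B; linarith
    · have := le_abs_self B; have := abs_nonneg A; linarith
  have hA : A ≤ 0 := by
    have : A = ∫ _ω, A ∂P := by simp
    rw [this, ← hmean]
    exact integral_mono (integrable_const A) hZint (fun ω => (hb ω).1)
  have hB : 0 ≤ B := by
    have : B = ∫ _ω, B ∂P := by simp
    rw [this, ← hmean]
    exact integral_mono hZint (integrable_const B) (fun ω => (hb ω).2)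
  -- pointwise convexity bound
  have hpt : ∀ ω, Real.exp (t * Z ω)
      ≤ ((B - Z ω) * Real.exp (t*A) + (Z ω - A) * Real.exp (t*B)) / (B - A) := by
    intro ω
    obtain ⟨h1, h2⟩ := hb ω
    have hl1 : (0:ℝ) ≤ (B - Z ω)/(B-A) := div_nonneg (by linarith) hD.le
    have hl2 : (0:ℝ) ≤ (Z ω - A)/(B-A) := div_nonneg (by linarith) hD.le
    have hsum : (B - Z ω)/(B-A) + (Z ω - A)/(B-A) = 1 := by field_simp; ring
    have h := convexOn_exp.2 (Set.mem_univ (t*A)) (Set.mem_univ (t*B)) hl1 hl2 hsum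
    simp only [smul_eq_mul] at h
    have harg : (B - Z ω)/(B-A) * (t*A) + (Z ω - A)/(B-A) * (t*B) = t * Z ω := by
      field_simp
      ring
    rw [harg] at h
    calc Real.exp (t * Z ω) ≤ (B - Z ω)/(B-A) * Real.exp (t*A)
          + (Z ω - A)/(B-A) * Real.exp (t*B) := h
      _ = ((B - Z ω) * Real.exp (t*A) + (Z ω - A) * Real.exp (t*B)) / (B - A) := by
          ring
  have hint1 : Integrable (fun ω => Real.exp (t * Z ω)) P := by
    apply aux_integrable_of_bdd P _ (Real.exp (|t| * (|A| + |B|)))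
      ((hZm.const_mul t).exp)
    intro ω
    rw [abs_of_pos (Real.exp_pos _), Real.exp_le_exp]
    calc t * Z ω ≤ |t * Z ω| := le_abs_self _
      _ = |t| * |Z ω| := abs_mul t (Z ω)
      _ ≤ |t| * (|A| + |B|) := by
          apply mul_le_mul_of_nonneg_left _ (abs_nonneg t)
          obtain ⟨h1, h2⟩ := hb ω
          rw [abs_le]
          constructor
          · have := neg_abs_le A; have := abs_nonneg B; linarith
          · have := le_abs_self B; have := abs_nonneg A; linarith
  have hint2 : Integrable
      (fun ω => ((B - Z ω) * Real.exp (t*A) + (Z ω - A) * Real.exp (t*B)) / (B - A)) P := by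
    apply Integrable.div_const
    exact (((integrable_const B).sub hZint).mul_const _).add
      ((hZint.sub (integrable_const A)).mul_const _)
  have hf1 : Integrable (fun ω => (B - Z ω) * Real.exp (t*A)) P :=
    ((integrable_const B).sub hZint).mul_const _
  have hf2 : Integrable (fun ω => (Z ω - A) * Real.exp (t*B)) P :=
    (hZint.sub (integrable_const A)).mul_const _
  have hstep : mgf Z P t
      ≤ (B * Real.exp (t*A) - A * Real.exp (t*B)) / (B - A) := by
    have := integral_mono hint1 hint2 hpt
    refine le_trans this (le_of_eq ?_)
    rw [integral_div, integral_add hf1 hf2,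
      integral_mul_const, integral_mul_const,
      integral_sub (integrable_const B) hZint, integral_sub hZint (integrable_const A),
      hmean, integral_const]
    simp
    ring
  exact hstep.trans (aux_frac A B t hA hB hAB)

lemma aux_prod (i : ℕ) : ∀ k, i ≤ k →
    ∏ j ∈ Finset.Icc (i + 1) k, (j : ℝ) / (j + 2)
      = ((i+1) * (i+2)) / ((k+1) * (k+2)) := by
  intro k
  induction k with
  | zero => intro h; interval_cases i; simp
  | succ n ih =>
    intro h
    rcases Nat.lt_or_ge i (n+1) with h1 | h1
    · have hin : i ≤ n := by omega
      rw [Finset.prod_Icc_succ_top (by omega), ih hin]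
      have h1 : ((n:ℝ)+1) ≠ 0 := by positivity
      have h2 : ((n:ℝ)+2) ≠ 0 := by positivity
      have h3 : ((n:ℝ)+3) ≠ 0 := by positivity
      push_cast
      field_simp
      ring
    · have : i = n + 1 := by omega
      subst this
      rw [Finset.Icc_eq_empty (by omega), Finset.prod_empty]
      push_cast
      have h2 : ((n:ℝ)+2) ≠ 0 := by positivity
      have h3 : ((n:ℝ)+3) ≠ 0 := by positivity
      field_simp

lemma aux_gauss : ∀ n : ℕ, ∑ i ∈ Finset.range n, ((i:ℝ) + 1) = n * (n+1) / 2 := by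
  intro n
  induction n with
  | zero => simp
  | succ m ih => rw [Finset.sum_range_succ, ih]; push_cast; ring


theorem stmt_15 {Ω : Type*} [MeasurableSpace Ω] (P : Measure Ω) [IsProbabilityMeasure P]
    (k : ℕ) (a b μ ε : ℝ) (hab : a < b) (hε : 0 < ε)
    (X : ℕ → Ω → ℝ)
    (hmeas : ∀ i, Measurable (X i))
    (hindep : iIndepFun X P)
    (hbdd : ∀ i, ∀ ω, X i ω ∈ Set.Icc a b)
    (hmean : ∀ i, ∫ ω, X i ω ∂P = μ)
    (w : ℕ → ℝ)
    (hw : ∀ i, w i = (2 / (i + 2)) * ∏ j ∈ Finset.Icc (i + 1) k, (j : ℝ) / (j + 2))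
    (Y : Ω → ℝ)
    (hY : ∀ ω, Y ω = ∑ i ∈ Finset.range (k + 1), w i * X i ω) :
    (∀ i ≤ k, w i ≤ 2 / (k + 2))
    ∧ (∑ i ∈ Finset.range (k + 1), w i = 1)
    ∧ P {ω | ε ≤ |Y ω - μ|}
        ≤ 2 * ENNReal.ofReal (Real.exp (-(k + 2) * ε ^ 2 / (2 * (b - a) ^ 2))) := by
  have hk1 : ((k:ℝ)+1) ≠ 0 := by positivity
  have hk2 : ((k:ℝ)+2) ≠ 0 := by positivity
  have hweq : ∀ i ≤ k, w i = 2*((i:ℝ)+1)/(((k:ℝ)+1)*((k:ℝ)+2)) := by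
    intro i hik
    rw [hw i, aux_prod i k hik]
    have : ((i:ℝ)+2) ≠ 0 := by positivity
    field_simp
  have part1 : ∀ i ≤ k, w i ≤ 2 / ((k:ℝ) + 2) := by
    intro i hik
    rw [hweq i hik, div_le_div_iff₀ (by positivity) (by positivity)]
    have hik' : (i:ℝ) ≤ (k:ℝ) := by exact_mod_cast hik
    nlinarith
  have part2 : ∑ i ∈ Finset.range (k + 1), w i = 1 := by
    have : ∀ i ∈ Finset.range (k+1), w i = ((i:ℝ)+1) * (2/(((k:ℝ)+1)*((k:ℝ)+2))) := by
      intro i hi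
      rw [hweq i (by simpa [Nat.lt_succ_iff] using Finset.mem_range.mp hi)]
      ring
    rw [Finset.sum_congr rfl this, ← Finset.sum_mul, aux_gauss]
    push_cast
    rw [div_mul_div_comm, div_eq_one_iff_eq (by positivity)]
    ring
  refine ⟨part1, part2, ?_⟩
  -- positivity of weights
  have hwpos : ∀ i ≤ k, 0 < w i := by
    intro i hik
    rw [hweq i hik]
    positivity
  have hba : (0:ℝ) < b - a := by linarith
  -- integrability of the X i
  have hXint : ∀ i, Integrable (X i) P := by
    intro i
    apply aux_integrable_of_bdd P (X i) (|a| + |b|) (hmeas i)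
    intro ω
    obtain ⟨h1, h2⟩ := hbdd i ω
    rw [abs_le]
    constructor
    · have := neg_abs_le a; have := abs_nonneg b; linarith
    · have := le_abs_self b; have := abs_nonneg a; linarith
  -- μ ∈ [a, b]
  have hμa : a ≤ μ := by
    rw [← hmean 0]
    have : a = ∫ _ω, a ∂P := by simp
    rw [this]
    exact integral_mono (integrable_const a) (hXint 0) (fun ω => (hbdd 0 ω).1)
  have hμb : μ ≤ b := by
    rw [← hmean 0]
    have : b = ∫ _ω, b ∂P := by simp
    rw [this]
    exact integral_mono (hXint 0) (integrable_const b) (fun ω => (hbdd 0 ω).2)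
  set Z : ℕ → Ω → ℝ := fun i ω => w i * (X i ω - μ) with hZ
  have hZmeas : ∀ i, Measurable (Z i) := fun i =>
    ((hmeas i).sub measurable_const).const_mul _
  have hZindep : iIndepFun Z P :=
    hindep.comp (fun i x => w i * (x - μ))
      (fun i => (measurable_id.sub measurable_const).const_mul _)
  -- sum identity
  have hS : ∀ ω, (∑ i ∈ Finset.range (k+1), Z i) ω = Y ω - μ := by
    intro ω
    rw [Finset.sum_apply, hY ω]
    have : ∀ i ∈ Finset.range (k+1), Z i ω = w i * X i ω - w i * μ := by
      intro i _; rw [hZ]; ring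
    rw [Finset.sum_congr rfl this, Finset.sum_sub_distrib, ← Finset.sum_mul, part2]
    ring
  -- boundedness of the sum
  have hZabs : ∀ i ≤ k, ∀ ω, |Z i ω| ≤ w i * (b - a) := by
    intro i hik ω
    rw [hZ, abs_mul, abs_of_pos (hwpos i hik)]
    apply mul_le_mul_of_nonneg_left _ (hwpos i hik).le
    rw [abs_le]
    obtain ⟨h1, h2⟩ := hbdd i ω
    constructor <;> [linarith; linarith]
  have hSbdd : ∀ ω, |(∑ i ∈ Finset.range (k+1), Z i) ω| ≤ b - a := by
    intro ω
    rw [Finset.sum_apply]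
    calc |∑ i ∈ Finset.range (k+1), Z i ω| ≤ ∑ i ∈ Finset.range (k+1), |Z i ω| :=
          Finset.abs_sum_le_sum_abs _ _
      _ ≤ ∑ i ∈ Finset.range (k+1), w i * (b - a) := by
          apply Finset.sum_le_sum
          intro i hi
          exact hZabs i (by simpa [Nat.lt_succ_iff] using Finset.mem_range.mp hi) ω
      _ = b - a := by rw [← Finset.sum_mul, part2, one_mul]
  have hSmeas : Measurable (∑ i ∈ Finset.range (k+1), Z i) := by
    have h : Measurable fun ω => ∑ i ∈ Finset.range (k+1), Z i ω :=
      Finset.measurable_sum _ (fun i _ => hZmeas i)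
    have heq : (∑ i ∈ Finset.range (k+1), Z i) = fun ω => ∑ i ∈ Finset.range (k+1), Z i ω := by
      funext ω; exact Finset.sum_apply ω _ _
    rw [heq]; exact h
  have hSint : ∀ t : ℝ, Integrable (fun ω => Real.exp (t * (∑ i ∈ Finset.range (k+1), Z i) ω)) P := by
    intro t
    apply aux_integrable_of_bdd P _ (Real.exp (|t| * (b - a)))
      ((hSmeas.const_mul t).exp)
    intro ω
    rw [abs_of_pos (Real.exp_pos _), Real.exp_le_exp]
    calc t * (∑ i ∈ Finset.range (k+1), Z i) ω ≤ |t * (∑ i ∈ Finset.range (k+1), Z i) ω| :=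
          le_abs_self _
      _ = |t| * |(∑ i ∈ Finset.range (k+1), Z i) ω| := abs_mul _ _
      _ ≤ |t| * (b - a) := mul_le_mul_of_nonneg_left (hSbdd ω) (abs_nonneg t)
  -- per-variable mgf bound
  have hmgf_i : ∀ t : ℝ, ∀ i ≤ k, mgf (Z i) P t ≤ Real.exp (t^2 * (w i * (b-a))^2 / 4) := by
    intro t i hik
    have hAB : w i * (a - μ) < w i * (b - μ) := by
      apply mul_lt_mul_of_pos_left _ (hwpos i hik)
      linarith
    have hbZ : ∀ ω, Z i ω ∈ Set.Icc (w i * (a - μ)) (w i * (b - μ)) := by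
      intro ω
      obtain ⟨h1, h2⟩ := hbdd i ω
      constructor
      · apply mul_le_mul_of_nonneg_left _ (hwpos i hik).le; linarith
      · apply mul_le_mul_of_nonneg_left _ (hwpos i hik).le; linarith
    have hmean0 : ∫ ω, Z i ω ∂P = 0 := by
      rw [hZ]
      simp only
      rw [integral_const_mul, integral_sub (hXint i) (integrable_const μ), hmean i,
        integral_const]
      simp
    have := aux_mgf_bounded P (Z i) (w i * (a - μ)) (w i * (b - μ)) t (hZmeas i)
      hbZ hAB hmean0
    convert this using 3
    ring
  -- mgf of the sum
  have hmgf_sum : ∀ t : ℝ, mgf (∑ i ∈ Finset.range (k+1), Z i) P t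
      ≤ Real.exp (t^2 * (b-a)^2 / (2 * ((k:ℝ)+2))) := by
    intro t
    rw [hZindep.mgf_sum hZmeas]
    have hsum_sq : ∑ i ∈ Finset.range (k+1), (w i)^2 ≤ 2 / ((k:ℝ)+2) := by
      calc ∑ i ∈ Finset.range (k+1), (w i)^2
          ≤ ∑ i ∈ Finset.range (k+1), (2/((k:ℝ)+2)) * w i := by
            apply Finset.sum_le_sum
            intro i hi
            have hik : i ≤ k := by simpa [Nat.lt_succ_iff] using Finset.mem_range.mp hi
            rw [pow_two]
            exact mul_le_mul_of_nonneg_right (part1 i hik) (hwpos i hik).le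
        _ = 2 / ((k:ℝ)+2) := by rw [← Finset.mul_sum, part2, mul_one]
    calc ∏ i ∈ Finset.range (k+1), mgf (Z i) P t
        ≤ ∏ i ∈ Finset.range (k+1), Real.exp (t^2 * (w i * (b-a))^2 / 4) := by
          apply Finset.prod_le_prod
          · intro i _; exact mgf_nonneg
          · intro i hi
            exact hmgf_i t i (by simpa [Nat.lt_succ_iff] using Finset.mem_range.mp hi)
      _ = Real.exp (∑ i ∈ Finset.range (k+1), t^2 * (w i * (b-a))^2 / 4) :=
          (Real.exp_sum _ _).symm
      _ ≤ Real.exp (t^2 * (b-a)^2 / (2 * ((k:ℝ)+2))) := by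
          rw [Real.exp_le_exp]
          have : ∑ i ∈ Finset.range (k+1), t^2 * (w i * (b-a))^2 / 4
              = (t^2 * (b-a)^2 / 4) * ∑ i ∈ Finset.range (k+1), (w i)^2 := by
            rw [Finset.mul_sum]
            apply Finset.sum_congr rfl
            intro i _
            ring
          rw [this]
          calc (t^2 * (b-a)^2 / 4) * ∑ i ∈ Finset.range (k+1), (w i)^2
              ≤ (t^2 * (b-a)^2 / 4) * (2 / ((k:ℝ)+2)) := by
                apply mul_le_mul_of_nonneg_left hsum_sq (by positivity)
            _ = t^2 * (b-a)^2 / (2 * ((k:ℝ)+2)) := by field_simp; ring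
  -- Chernoff
  set t₀ : ℝ := ε * ((k:ℝ)+2) / (b-a)^2 with ht₀def
  have ht₀ : 0 < t₀ := by rw [ht₀def]; positivity
  have hexp_eq : -t₀ * ε + t₀^2 * (b-a)^2 / (2 * ((k:ℝ)+2))
      = -((k:ℝ) + 2) * ε ^ 2 / (2 * (b - a) ^ 2) := by
    rw [ht₀def]
    field_simp
    ring
  have htail : ∀ t : ℝ, t^2 = t₀^2 →
      Real.exp (-t₀ * ε) * mgf (∑ i ∈ Finset.range (k+1), Z i) P t
        ≤ Real.exp (-((k:ℝ) + 2) * ε ^ 2 / (2 * (b - a) ^ 2)) := by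
    intro t ht2
    calc Real.exp (-t₀ * ε) * mgf (∑ i ∈ Finset.range (k+1), Z i) P t
        ≤ Real.exp (-t₀ * ε) * Real.exp (t^2 * (b-a)^2 / (2 * ((k:ℝ)+2))) :=
          mul_le_mul_of_nonneg_left (hmgf_sum t) (Real.exp_pos _).le
      _ = Real.exp (-((k:ℝ) + 2) * ε ^ 2 / (2 * (b - a) ^ 2)) := by
          rw [ht2, ← Real.exp_add, hexp_eq]
  have hup : (P {ω | ε ≤ (∑ i ∈ Finset.range (k+1), Z i) ω}).toReal
      ≤ Real.exp (-((k:ℝ) + 2) * ε ^ 2 / (2 * (b - a) ^ 2)) :=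
    le_trans (measure_ge_le_exp_mul_mgf ε ht₀.le (hSint t₀)) (htail t₀ rfl)
  have hlo : (P {ω | (∑ i ∈ Finset.range (k+1), Z i) ω ≤ -ε}).toReal
      ≤ Real.exp (-((k:ℝ) + 2) * ε ^ 2 / (2 * (b - a) ^ 2)) := by
    refine le_trans (measure_le_le_exp_mul_mgf (-ε) (neg_nonpos.mpr ht₀.le) (hSint (-t₀))) ?_
    have : -(-t₀) * -ε = -t₀ * ε := by ring
    rw [this]
    exact htail (-t₀) (by ring)
  -- combine
  have hsubset : {ω | ε ≤ |Y ω - μ|}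
      ⊆ {ω | ε ≤ (∑ i ∈ Finset.range (k+1), Z i) ω}
        ∪ {ω | (∑ i ∈ Finset.range (k+1), Z i) ω ≤ -ε} := by
    intro ω hω
    simp only [Set.mem_setOf_eq] at hω
    rcases le_abs.mp hω with h | h
    · left; simp only [Set.mem_setOf_eq, hS ω]; exact h
    · right; simp only [Set.mem_setOf_eq, hS ω]; linarith
  calc P {ω | ε ≤ |Y ω - μ|}
      ≤ P ({ω | ε ≤ (∑ i ∈ Finset.range (k+1), Z i) ω}
          ∪ {ω | (∑ i ∈ Finset.range (k+1), Z i) ω ≤ -ε}) := measure_mono hsubset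
    _ ≤ P {ω | ε ≤ (∑ i ∈ Finset.range (k+1), Z i) ω}
          + P {ω | (∑ i ∈ Finset.range (k+1), Z i) ω ≤ -ε} := measure_union_le _ _
    _ ≤ ENNReal.ofReal (Real.exp (-((k:ℝ) + 2) * ε ^ 2 / (2 * (b - a) ^ 2)))
          + ENNReal.ofReal (Real.exp (-((k:ℝ) + 2) * ε ^ 2 / (2 * (b - a) ^ 2))) := by
        gcongr
        · rw [← ENNReal.ofReal_toReal (measure_ne_top P _)]
          exact ENNReal.ofReal_le_ofReal hup
        · rw [← ENNReal.ofReal_toReal (measure_ne_top P _)]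
          exact ENNReal.ofReal_le_ofReal hlo
    _ = 2 * ENNReal.ofReal (Real.exp (-((k:ℝ) + 2) * ε ^ 2 / (2 * (b - a) ^ 2))) :=
        (two_mul _).symm
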